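/- Let (X,T) be a topological dynamical system and μ an ergodic T-invariant Borel probability measure on X. Then (X,T) is μ-mean sensitive if and only if it is μ-logarithmically mean sensitive. -/

import Mathlib

open Filter MeasureTheory Topology

/-- The `n`-th harmonic number `H_n = ∑_{k=1}^n 1/k` as a real number. -/
noncomputable def H (n : ℕ) : ℝ := ∑ k ∈ Finset.range n, (1 : ℝ) / (k + 1)

/-- A Borel probability measure `μ` is `T`-invariant if `μ(T⁻¹B) = μ(B)` for every Borel set. -/
def IsInvariantMeasure {X : Type*} [MetricSpace X] [MeasurableSpace X]
    (T : X → X) (μ : ProbabilityMeasure X) : Prop :=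
  ∀ B : Set X, MeasurableSet B → μ (T ⁻¹' B) = μ B

/-- A `T`-invariant Borel probability measure `μ` is ergodic if every Borel set `B` with
`T⁻¹B = B` satisfies `μ(B) ∈ {0,1}`. -/
def IsErgodicMeasure {X : Type*} [MetricSpace X] [MeasurableSpace X]
    (T : X → X) (μ : ProbabilityMeasure X) : Prop :=
  IsInvariantMeasure T μ ∧
    ∀ B : Set X, MeasurableSet B → T ⁻¹' B = B → μ B = 0 ∨ μ B = 1

/-- `(X,T)` is `μ`-mean sensitive if there is `ε > 0` such that every Borel set `B` of positive
measure contains `x, y` with `limsup_n (1/n) ∑_{k=1}^n d(T^{k-1}x, T^{k-1}y) ≥ ε`. -/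
def MuMeanSensitive {X : Type*} [MetricSpace X] [MeasurableSpace X]
    (T : X → X) (μ : ProbabilityMeasure X) : Prop :=
  ∃ ε > (0 : ℝ), ∀ B : Set X, MeasurableSet B → 0 < μ B →
    ∃ x ∈ B, ∃ y ∈ B,
      ε ≤ limsup (fun n : ℕ =>
        (1 / (n : ℝ)) * ∑ k ∈ Finset.range n, dist (T^[k] x) (T^[k] y)) atTop

/-- `(X,T)` is `μ`-logarithmically mean sensitive if there is `ε > 0` such that every Borel set
`B` of positive measure contains `x, y` with
`limsup_n (1/H_n) ∑_{k=1}^n (1/k) d(T^{k-1}x, T^{k-1}y) ≥ ε`. -/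
def MuLogMeanSensitive {X : Type*} [MetricSpace X] [MeasurableSpace X]
    (T : X → X) (μ : ProbabilityMeasure X) : Prop :=
  ∃ ε > (0 : ℝ), ∀ B : Set X, MeasurableSet B → 0 < μ B →
    ∃ x ∈ B, ∃ y ∈ B,
      ε ≤ limsup (fun n : ℕ =>
        (1 / H n) * ∑ k ∈ Finset.range n, (1 / (k + 1 : ℝ)) * dist (T^[k] x) (T^[k] y)) atTop

open Finset
lemma aux_H_tendsto : Tendsto H atTop atTop :=
  Real.tendsto_sum_range_one_div_nat_succ_atTop

lemma aux_H_pos {n : ℕ} (hn : 1 ≤ n) : 0 < H n := by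
  have : (0:ℝ) < 1/(0+1) := by norm_num
  calc (0:ℝ) < ∑ k ∈ Finset.range 1, (1:ℝ)/(k+1) := by norm_num
  _ ≤ H n := by
    apply Finset.sum_le_sum_of_subset_of_nonneg
    · exact Finset.range_subset_range.2 hn
    · intro i _ _; positivity

lemma aux_weighted (b : ℕ → ℝ) (L : ℝ) (hb : Tendsto b atTop (𝓝 L)) :
    Tendsto (fun n : ℕ => (1/H n) * ∑ j ∈ range n, b j * (1/(j+1))) atTop (𝓝 L) := by
  have hg : ∀ j : ℕ, (0:ℝ) ≤ 1/(j+1) := fun j => by positivity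
  have hlo : (fun j : ℕ => (b j - L) * (1/(j+1))) =o[atTop] fun j : ℕ => 1/((j:ℝ)+1) := by
    have h1 : (fun j : ℕ => b j - L) =o[atTop] (fun _ : ℕ => (1:ℝ)) :=
      (Asymptotics.isLittleO_one_iff ℝ).2 (tendsto_sub_nhds_zero_iff.2 hb)
    simpa using h1.mul_isBigO (Asymptotics.isBigO_refl (fun j : ℕ => 1/((j:ℝ)+1)) atTop)
  have hsum := hlo.sum_range hg aux_H_tendsto
  have h0 : Tendsto (fun n => (∑ j ∈ range n, (b j - L) * (1/(j+1))) / H n) atTop (𝓝 0) := by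
    refine (Asymptotics.isLittleO_iff_tendsto' ?_).1 hsum
    filter_upwards [eventually_ge_atTop 1] with n hn h
    exact absurd h (ne_of_gt (aux_H_pos hn))
  have : Tendsto (fun n => L + (∑ j ∈ range n, (b j - L) * (1/(j+1))) / H n) atTop (𝓝 (L + 0)) :=
    tendsto_const_nhds.add h0
  rw [add_zero] at this
  apply this.congr'
  filter_upwards [eventually_ge_atTop 1] with n hn
  have hH := aux_H_pos hn
  have : ∑ j ∈ range n, b j * (1/(j+1)) =
      L * H n + ∑ j ∈ range n, (b j - L) * (1/(j+1)) := by
    rw [H, Finset.mul_sum, ← Finset.sum_add_distrib]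
    apply Finset.sum_congr rfl
    intro j _; push_cast; ring
  rw [this]; field_simp

lemma aux_abel (a : ℕ → ℝ) (n : ℕ) :
    ∑ k ∈ range n, (1/((k:ℝ)+1)) * a k =
      ((n:ℝ)⁻¹ * ∑ k ∈ range n, a k) +
        ∑ j ∈ range n, (((j:ℝ)⁻¹ * ∑ k ∈ range j, a k) * (1/(j+1))) := by
  induction n with
  | zero => simp
  | succ n ih =>
    rw [Finset.sum_range_succ, ih, Finset.sum_range_succ (fun j => ((j:ℝ)⁻¹ * ∑ k ∈ range j, a k) * (1/(j+1)))]
    rcases Nat.eq_zero_or_pos n with h0 | hpos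
    · subst h0; simp
    · have hn : ((n:ℝ)) ≠ 0 := Nat.cast_ne_zero.2 hpos.ne'
      have hn1 : ((n:ℝ)+1) ≠ 0 := by positivity
      rw [Finset.sum_range_succ a]
      push_cast
      field_simp
      ring

lemma aux_log_of_cesaro (a : ℕ → ℝ) (L : ℝ)
    (h : Tendsto (fun n : ℕ => (n:ℝ)⁻¹ * ∑ k ∈ range n, a k) atTop (𝓝 L)) :
    Tendsto (fun n : ℕ => (1/H n) * ∑ k ∈ range n, (1/((k:ℝ)+1)) * a k) atTop (𝓝 L) := by
  have h1 : Tendsto (fun n : ℕ => ((n:ℝ)⁻¹ * ∑ k ∈ range n, a k) * (1/H n)) atTop (𝓝 0) := by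
    have h2 : Tendsto (fun n : ℕ => 1/H n) atTop (𝓝 0) :=
      tendsto_const_nhds.div_atTop aux_H_tendsto
    simpa using h.mul h2
  have h3 := aux_weighted (fun j => (j:ℝ)⁻¹ * ∑ k ∈ range j, a k) L h
  have := h1.add h3
  rw [zero_add] at this
  apply this.congr
  intro n
  rw [aux_abel a n]
  ring

lemma aux_bddle {u : ℕ → ℝ} {C : ℝ} (h : ∀ n, u n ≤ C) :
    IsBoundedUnder (· ≤ ·) (atTop : Filter ℕ) u :=
  isBoundedUnder_of ⟨C, h⟩

lemma aux_bddge {u : ℕ → ℝ} {C : ℝ} (h : ∀ n, C ≤ u n) :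
    IsBoundedUnder (· ≥ ·) (atTop : Filter ℕ) u :=
  isBoundedUnder_of ⟨C, fun n => h n⟩

lemma aux_limsup_triangle {u v w : ℕ → ℝ} {C : ℝ} (h : ∀ n, u n ≤ v n + w n)
    (hu0 : ∀ n, 0 ≤ u n) (hv0 : ∀ n, 0 ≤ v n) (hv1 : ∀ n, v n ≤ C)
    (hw0 : ∀ n, 0 ≤ w n) (hw1 : ∀ n, w n ≤ C) :
    limsup u atTop ≤ limsup v atTop + limsup w atTop := by
  have h1 : limsup u atTop ≤ limsup (v + w) atTop :=
    limsup_le_limsup (Eventually.of_forall h) ((aux_bddge hu0).isCoboundedUnder_le)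
      (aux_bddle (C := C + C) (fun n => add_le_add (hv1 n) (hw1 n)))
  refine h1.trans (limsup_add_le (aux_bddge hv0) (aux_bddle hv1)
    ((aux_bddge hw0).isCoboundedUnder_le) (aux_bddle hw1))

lemma aux_limsup_eq_of_sub {u w : ℕ → ℝ} {C : ℝ}
    (hu0 : ∀ n, 0 ≤ u n) (hu1 : ∀ n, u n ≤ C) (hw0 : ∀ n, 0 ≤ w n) (hw1 : ∀ n, w n ≤ C)
    (h : Tendsto (fun n => u n - w n) atTop (𝓝 0)) :
    limsup u atTop = limsup w atTop := by
  have hz : limsup (fun n => u n - w n) atTop = 0 := h.limsup_eq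
  have hz' : limsup (fun n => w n - u n) atTop = 0 := by
    have : Tendsto (fun n => w n - u n) atTop (𝓝 0) := by
      have := h.neg; rw [neg_zero] at this
      exact this.congr (fun n => by ring)
    exact this.limsup_eq
  have h1 : limsup u atTop ≤ limsup w atTop := by
    have : limsup u atTop ≤ limsup w atTop + limsup (fun n => u n - w n) atTop := by
      have heq : u = w + fun n => u n - w n := by funext n; simp
      nth_rewrite 1 [heq]
      exact limsup_add_le (aux_bddge hw0) (aux_bddle hw1)
        (h.isBoundedUnder_ge.isCoboundedUnder_le) h.isBoundedUnder_le
    rwa [hz, add_zero] at this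
  have h2 : limsup w atTop ≤ limsup u atTop := by
    have : limsup w atTop ≤ limsup u atTop + limsup (fun n => w n - u n) atTop := by
      have heq : w = u + fun n => w n - u n := by funext n; simp
      nth_rewrite 1 [heq]
      refine limsup_add_le (aux_bddge hu0) (aux_bddle hu1) ?_ ?_
      · have : Tendsto (fun n => w n - u n) atTop (𝓝 0) := by
          have := h.neg; rw [neg_zero] at this
          exact this.congr (fun n => by ring)
        exact this.isBoundedUnder_ge.isCoboundedUnder_le
      · have : Tendsto (fun n => w n - u n) atTop (𝓝 0) := by
          have := h.neg; rw [neg_zero] at this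
          exact this.congr (fun n => by ring)
        exact this.isBoundedUnder_le
    rwa [hz', add_zero] at this
  exact le_antisymm h1 h2

lemma aux_liminf_eq_of_sub {u w : ℕ → ℝ} {C : ℝ}
    (hu0 : ∀ n, 0 ≤ u n) (hu1 : ∀ n, u n ≤ C) (hw0 : ∀ n, 0 ≤ w n) (hw1 : ∀ n, w n ≤ C)
    (h : Tendsto (fun n => u n - w n) atTop (𝓝 0)) :
    liminf u atTop = liminf w atTop := by
  have h' : Tendsto (fun n => w n - u n) atTop (𝓝 0) := by
    have := h.neg; rw [neg_zero] at this
    exact this.congr (fun n => by ring)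
  have hz : liminf (fun n => u n - w n) atTop = 0 := h.liminf_eq
  have hz' : liminf (fun n => w n - u n) atTop = 0 := h'.liminf_eq
  have h1 : liminf w atTop ≤ liminf u atTop := by
    have : liminf w atTop + liminf (fun n => u n - w n) atTop ≤ liminf u atTop := by
      have heq : u = w + fun n => u n - w n := by funext n; simp
      nth_rewrite 2 [heq]
      exact le_liminf_add (aux_bddge hw0) (aux_bddle hw1)
        h.isBoundedUnder_ge (h.isBoundedUnder_le.isCoboundedUnder_ge)
    rwa [hz, add_zero] at this
  have h2 : liminf u atTop ≤ liminf w atTop := by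
    have : liminf u atTop + liminf (fun n => w n - u n) atTop ≤ liminf w atTop := by
      have heq : w = u + fun n => w n - u n := by funext n; simp
      nth_rewrite 2 [heq]
      exact le_liminf_add (aux_bddge hu0) (aux_bddle hu1)
        h'.isBoundedUnder_ge (h'.isBoundedUnder_le.isCoboundedUnder_ge)
    rwa [hz', add_zero] at this
  exact le_antisymm h2 h1

section Birkhoff
variable {Ω : Type*} [MeasurableSpace Ω]

noncomputable def auxM (S : Ω → Ω) (f : Ω → ℝ) : ℕ → Ω → ℝ
  | 0 => fun _ => 0
  | (N+1) => fun ω => max 0 (f ω + auxM S f N (S ω))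

lemma auxM_nonneg (S : Ω → Ω) (f : Ω → ℝ) : ∀ N ω, 0 ≤ auxM S f N ω
  | 0, ω => le_refl 0
  | (N+1), ω => le_max_left _ _

lemma auxM_mono (S : Ω → Ω) (f : Ω → ℝ) (ω : Ω) : Monotone (fun N => auxM S f N ω) := by
  apply monotone_nat_of_le_succ
  intro N
  induction N generalizing ω with
  | zero => exact auxM_nonneg S f 1 ω
  | succ N ih =>
    show max 0 _ ≤ max 0 _
    exact max_le_max le_rfl (by gcongr; exact ih (S ω))

lemma auxM_bound {f : Ω → ℝ} {C : ℝ} (S : Ω → Ω) (hC : ∀ ω, |f ω| ≤ C) :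
    ∀ N ω, auxM S f N ω ≤ N * max C 0
  | 0, ω => by simp [auxM]
  | (N+1), ω => by
    have h1 : f ω + auxM S f N (S ω) ≤ max C 0 + N * max C 0 := by
      have := abs_le.1 (hC ω)
      have h2 := auxM_bound S hC N (S ω)
      have : f ω ≤ max C 0 := le_trans this.2 (le_max_left _ _)
      linarith
    show max 0 _ ≤ _
    apply max_le
    · positivity
    · push_cast; linarith

lemma auxM_ge_birkhoff (S : Ω → Ω) (f : Ω → ℝ) :
    ∀ n N, n ≤ N → ∀ ω, birkhoffSum S f n ω ≤ auxM S f N ω := by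
  intro n
  induction n with
  | zero => intro N _ ω; simpa [birkhoffSum] using auxM_nonneg S f N ω
  | succ m ih =>
    intro N hN ω
    obtain ⟨N', rfl⟩ := Nat.exists_eq_add_of_le hN
    have h1 : birkhoffSum S f (m+1) ω = f ω + birkhoffSum S f m (S ω) :=
      birkhoffSum_succ' S f m ω
    have h2 : birkhoffSum S f m (S ω) ≤ auxM S f (m + N') (S ω) :=
      ih _ (Nat.le_add_right _ _) (S ω)
    calc birkhoffSum S f (m+1) ω ≤ f ω + auxM S f (m + N') (S ω) := by rw [h1]; linarith
    _ ≤ max 0 (f ω + auxM S f (m + N') (S ω)) := le_max_right _ _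
    _ = auxM S f (m + N' + 1) ω := rfl
    _ = auxM S f (m + 1 + N') ω := by rw [show m + 1 + N' = m + N' + 1 from by omega]

lemma auxM_measurable {S : Ω → Ω} {f : Ω → ℝ} (hS : Measurable S) (hf : Measurable f) :
    ∀ N, Measurable (auxM S f N)
  | 0 => measurable_const
  | (N+1) => measurable_const.max (hf.add ((auxM_measurable hS hf N).comp hS))

lemma aux_met (ν : Measure Ω) [IsFiniteMeasure ν] {S : Ω → Ω} (hS : MeasurePreserving S ν ν)
    {f : Ω → ℝ} (hf : Measurable f) {C : ℝ} (hC : ∀ ω, |f ω| ≤ C) (N : ℕ) :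
    0 ≤ ∫ ω in {ω | 0 < auxM S f (N+1) ω}, f ω ∂ν := by
  set Q := auxM S f (N+1) with hQ
  set E := {ω | 0 < Q ω} with hEdef
  have hQm : Measurable Q := auxM_measurable hS.measurable hf (N+1)
  have hE : MeasurableSet E := measurableSet_lt measurable_const hQm
  have hQ0 : ∀ ω, 0 ≤ Q ω := auxM_nonneg S f (N+1)
  have hQb : ∀ ω, ‖Q ω‖ ≤ (N+1) * max C 0 := fun ω => by
    rw [Real.norm_eq_abs, abs_of_nonneg (hQ0 ω)]
    exact_mod_cast auxM_bound S hC (N+1) ω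
  have hQint : Integrable Q ν :=
    (integrable_const _).mono' hQm.aestronglyMeasurable (ae_of_all _ hQb)
  have hfint : Integrable f ν :=
    (integrable_const C).mono' hf.aestronglyMeasurable
      (ae_of_all _ fun ω => by rw [Real.norm_eq_abs]; exact hC ω)
  have hQSm : Measurable (fun ω => Q (S ω)) := hQm.comp hS.measurable
  have hQSint : Integrable (fun ω => Q (S ω)) ν :=
    (integrable_const _).mono' hQSm.aestronglyMeasurable (ae_of_all _ fun ω => hQb (S ω))
  have hkey : ∀ ω ∈ E, Q ω - Q (S ω) ≤ f ω := by
    intro ω hω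
    have h1 : Q ω = f ω + auxM S f N (S ω) := by
      have hlt : (0:ℝ) < max 0 (f ω + auxM S f N (S ω)) := hω
      have hpos : (0:ℝ) < f ω + auxM S f N (S ω) := by
        by_contra hle
        push_neg at hle
        rw [max_eq_left hle] at hlt; exact lt_irrefl _ hlt
      show max 0 _ = _
      exact max_eq_right hpos.le
    have h2 : auxM S f N (S ω) ≤ Q (S ω) := auxM_mono S f (S ω) (Nat.le_succ N)
    linarith
  have step1 : ∫ ω in E, (Q ω - Q (S ω)) ∂ν ≤ ∫ ω in E, f ω ∂ν := by
    apply setIntegral_mono_on (hQint.sub hQSint).integrableOn hfint.integrableOn hE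
    exact hkey
  have step2 : ∫ ω in E, (Q ω - Q (S ω)) ∂ν
      = ∫ ω in E, Q ω ∂ν - ∫ ω in E, Q (S ω) ∂ν :=
    integral_sub hQint.integrableOn hQSint.integrableOn
  have step3 : ∫ ω in E, Q ω ∂ν = ∫ ω, Q ω ∂ν := by
    rw [← integral_add_compl hE hQint]
    have : ∫ ω in Eᶜ, Q ω ∂ν = 0 := by
      rw [setIntegral_congr_fun hE.compl (g := fun _ => (0:ℝ)) ?_, integral_zero]
      intro ω hω
      have : ¬ 0 < Q ω := hω
      exact le_antisymm (not_lt.1 this) (hQ0 ω) |>.symm ▸ rfl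
    rw [this, add_zero]
  have step4 : ∫ ω in E, Q (S ω) ∂ν ≤ ∫ ω, Q (S ω) ∂ν :=
    setIntegral_le_integral hQSint (ae_of_all _ fun ω => hQ0 (S ω))
  have step5 : ∫ ω, Q (S ω) ∂ν = ∫ ω, Q ω ∂ν := by
    rw [← integral_map hS.measurable.aemeasurable hQm.aestronglyMeasurable, hS.map_eq]
  linarith


lemma aux_birkhoff_pos (ν : Measure Ω) [IsFiniteMeasure ν] {S : Ω → Ω}
    (hS : MeasurePreserving S ν ν) {f : Ω → ℝ} (hf : Measurable f) {C : ℝ}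
    (hC : ∀ ω, |f ω| ≤ C)
    (hcov : ∀ᵐ ω ∂ν, ∃ n, 0 < birkhoffSum S f n ω) :
    0 ≤ ∫ ω, f ω ∂ν := by
  set E := fun N : ℕ => {ω | 0 < auxM S f (N+1) ω} with hEdef
  have hEm : ∀ N, MeasurableSet (E N) := fun N =>
    measurableSet_lt measurable_const (auxM_measurable hS.measurable hf (N+1))
  have hmono : Monotone E := by
    intro i j hij ω hω
    exact lt_of_lt_of_le hω (auxM_mono S f ω (by omega))
  have hfint : Integrable f ν :=
    (integrable_const C).mono' hf.aestronglyMeasurable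
      (ae_of_all _ fun ω => by rw [Real.norm_eq_abs]; exact hC ω)
  have hlim := tendsto_setIntegral_of_monotone hEm hmono hfint.integrableOn
  have hU : ∫ ω in ⋃ N, E N, f ω ∂ν = ∫ ω, f ω ∂ν := by
    have hae : (⋃ N, E N) =ᵐ[ν] Set.univ := by
      rw [Filter.eventuallyEq_set]
      filter_upwards [hcov] with ω hω
      simp only [Set.mem_iUnion, Set.mem_univ, iff_true]
      obtain ⟨n, hn⟩ := hω
      exact ⟨n, lt_of_lt_of_le hn (auxM_ge_birkhoff S f n (n+1) (Nat.le_succ n) ω)⟩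
    rw [setIntegral_congr_set hae, setIntegral_univ]
  rw [← hU]
  exact ge_of_tendsto' hlim (fun N => aux_met ν hS hf hC N)

lemma aux_birkhoff (ν : Measure Ω) [IsFiniteMeasure ν] {S : Ω → Ω}
    (hS : MeasurePreserving S ν ν) {f : Ω → ℝ} (hf : Measurable f) {C : ℝ}
    (hC0 : 0 ≤ C) (hCf : ∀ ω, 0 ≤ f ω ∧ f ω ≤ C) :
    ∀ᵐ ω ∂ν, ∃ L, Tendsto (fun n : ℕ => (n:ℝ)⁻¹ * birkhoffSum S f n ω) atTop (𝓝 L) := by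
  set avg := fun (n : ℕ) (ω : Ω) => (n:ℝ)⁻¹ * birkhoffSum S f n ω with havg
  have hbS : ∀ n ω, 0 ≤ birkhoffSum S f n ω ∧ birkhoffSum S f n ω ≤ n * C := by
    intro n ω
    constructor
    · exact Finset.sum_nonneg fun k _ => (hCf _).1
    · calc birkhoffSum S f n ω ≤ ∑ _k ∈ Finset.range n, C :=
          Finset.sum_le_sum fun k _ => (hCf _).2
      _ = n * C := by simp [mul_comm]
  have havg0 : ∀ n ω, 0 ≤ avg n ω := fun n ω =>
    mul_nonneg (by positivity) (hbS n ω).1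
  have havgC : ∀ n ω, avg n ω ≤ C := by
    intro n ω
    rcases Nat.eq_zero_or_pos n with rfl | hn
    · simpa [havg] using hC0
    · have hnR : (0:ℝ) < n := by exact_mod_cast hn
      rw [havg]
      calc (n:ℝ)⁻¹ * birkhoffSum S f n ω ≤ (n:ℝ)⁻¹ * (n * C) := by
            apply mul_le_mul_of_nonneg_left (hbS n ω).2 (by positivity)
        _ = C := by field_simp
  have havgm : ∀ n, Measurable (avg n) := by
    intro n
    apply Measurable.const_mul
    exact Finset.measurable_sum _ fun k _ => hf.comp (hS.measurable.iterate k)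
  set sig := fun ω => limsup (fun n => avg n ω) atTop with hsig
  set inf := fun ω => liminf (fun n => avg n ω) atTop with hinf
  have hsigm : Measurable sig := Measurable.limsup havgm
  have hinfm : Measurable inf := Measurable.liminf havgm
  -- pointwise invariance
  have hdiff : ∀ ω, Tendsto (fun n => avg n (S ω) - avg (n+1) ω) atTop (𝓝 0) := by
    intro ω
    have heq : ∀ n : ℕ, 1 ≤ n → avg n (S ω) - avg (n+1) ω
        = birkhoffSum S f (n+1) ω * ((n:ℝ)⁻¹ - ((n:ℝ)+1)⁻¹) - f ω * (n:ℝ)⁻¹ := by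
      intro n hn
      have hb : birkhoffSum S f n (S ω) = birkhoffSum S f (n+1) ω - f ω := by
        rw [birkhoffSum_succ' S f n ω]; ring
      rw [havg]
      simp only
      rw [hb]
      push_cast
      ring
    have h1 : Tendsto (fun n : ℕ => birkhoffSum S f (n+1) ω * ((n:ℝ)⁻¹ - ((n:ℝ)+1)⁻¹)
        - f ω * (n:ℝ)⁻¹) atTop (𝓝 0) := by
      have ha : Tendsto (fun n : ℕ => birkhoffSum S f (n+1) ω * ((n:ℝ)⁻¹ - ((n:ℝ)+1)⁻¹))
          atTop (𝓝 0) := by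
        apply squeeze_zero_norm' (a := fun n : ℕ => 2 * C * (n:ℝ)⁻¹) ?_ ?_
        swap
        · have : Tendsto (fun n : ℕ => ((n:ℝ))⁻¹) atTop (𝓝 0) := tendsto_inv_atTop_nhds_zero_nat
          simpa using (this.const_mul (2 * C))
        · filter_upwards [eventually_ge_atTop 1] with n hn
          have hnR : (0:ℝ) < n := by exact_mod_cast hn
          · 
            have hb := hbS (n+1) ω
            rw [Real.norm_eq_abs, abs_mul]
            have e1 : |birkhoffSum S f (n+1) ω| ≤ (n+1) * C := by
              rw [abs_of_nonneg hb.1]; exact_mod_cast hb.2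
            have e2 : |(n:ℝ)⁻¹ - ((n:ℝ)+1)⁻¹| = ((n:ℝ) * ((n:ℝ)+1))⁻¹ := by
              have h3 : (n:ℝ)⁻¹ - ((n:ℝ)+1)⁻¹ = ((n:ℝ) * ((n:ℝ)+1))⁻¹ := by
                rw [inv_sub_inv (ne_of_gt hnR) (by positivity : ((n:ℝ)+1) ≠ 0)]
                ring_nf
              rw [h3, abs_of_nonneg (by positivity)]
            calc |birkhoffSum S f (n+1) ω| * |(n:ℝ)⁻¹ - ((n:ℝ)+1)⁻¹|
                ≤ (((n:ℝ)+1) * C) * ((n:ℝ) * ((n:ℝ)+1))⁻¹ := by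
                  rw [e2]; apply mul_le_mul_of_nonneg_right e1 (by positivity)
              _ = C * (n:ℝ)⁻¹ := by field_simp
              _ ≤ 2 * C * (n:ℝ)⁻¹ := by
                  apply mul_le_mul_of_nonneg_right ?_ (by positivity)
                  linarith
      have hbb : Tendsto (fun n : ℕ => f ω * (n:ℝ)⁻¹) atTop (𝓝 0) := by
        have : Tendsto (fun n : ℕ => ((n:ℝ))⁻¹) atTop (𝓝 0) := tendsto_inv_atTop_nhds_zero_nat
        simpa using this.const_mul (f ω)
      simpa using ha.sub hbb
    apply h1.congr'
    filter_upwards [eventually_ge_atTop 1] with n hn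
    exact (heq n hn).symm
  have hshift_sig : ∀ ω, sig (S ω) = sig ω := by
    intro ω
    have h1 : limsup (fun n => avg n (S ω)) atTop = limsup (fun n => avg (n+1) ω) atTop :=
      aux_limsup_eq_of_sub (fun n => havg0 n (S ω)) (fun n => havgC n (S ω))
        (fun n => havg0 (n+1) ω) (fun n => havgC (n+1) ω) (hdiff ω)
    have h2 : limsup (fun n => avg (n+1) ω) atTop = limsup (fun n => avg n ω) atTop :=
      limsup_nat_add (fun n => avg n ω) 1
    rw [hsig]; simp only; rw [h1, h2]
  have hshift_inf : ∀ ω, inf (S ω) = inf ω := by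
    intro ω
    have h1 : liminf (fun n => avg n (S ω)) atTop = liminf (fun n => avg (n+1) ω) atTop :=
      aux_liminf_eq_of_sub (fun n => havg0 n (S ω)) (fun n => havgC n (S ω))
        (fun n => havg0 (n+1) ω) (fun n => havgC (n+1) ω) (hdiff ω)
    have h2 : liminf (fun n => avg (n+1) ω) atTop = liminf (fun n => avg n ω) atTop :=
      liminf_nat_add (fun n => avg n ω) 1
    rw [hinf]; simp only; rw [h1, h2]
  have hinf_le_sig : ∀ ω, inf ω ≤ sig ω := fun ω =>
    liminf_le_limsup (aux_bddle (fun n => havgC n ω)) (aux_bddge (fun n => havg0 n ω))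
  have hfint : Integrable f ν :=
    (integrable_const C).mono' hf.aestronglyMeasurable
      (ae_of_all _ fun ω => by rw [Real.norm_eq_abs, abs_of_nonneg (hCf ω).1]; exact (hCf ω).2)
  have hkey : ∀ a b : ℝ, a < b → ν {ω | inf ω < a ∧ b < sig ω} = 0 := by
    intro a b hab
    set E := {ω | inf ω < a ∧ b < sig ω} with hE
    have hEm : MeasurableSet E :=
      (measurableSet_lt hinfm measurable_const).inter (measurableSet_lt measurable_const hsigm)
    have hEinv : S ⁻¹' E = E := by
      ext ω
      simp only [Set.mem_preimage, hE, Set.mem_setOf_eq, hshift_inf ω, hshift_sig ω]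
    have hres : MeasurePreserving S (ν.restrict E) (ν.restrict E) := by
      refine ⟨hS.measurable, ?_⟩
      apply Measure.ext
      intro A hA
      rw [Measure.map_apply hS.measurable hA, Measure.restrict_apply (hS.measurable hA),
        Measure.restrict_apply hA]
      have h3 : S ⁻¹' A ∩ E = S ⁻¹' (A ∩ E) := by rw [Set.preimage_inter, hEinv]
      rw [h3, hS.measure_preimage (hA.inter hEm).nullMeasurableSet]
    have hrestuniv : (ν.restrict E) Set.univ = ν E := by
      rw [Measure.restrict_apply MeasurableSet.univ, Set.univ_inter]
    have hbSn : ∀ (n : ℕ) (ω : Ω), 1 ≤ n → birkhoffSum S f n ω = n * avg n ω := by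
      intro n ω hn
      have hnR : ((n:ℝ)) ≠ 0 := by
        have : (0:ℝ) < n := by exact_mod_cast hn
        exact ne_of_gt this
      rw [havg]
      simp only
      field_simp
    -- lower estimate : b * (ν E).toReal ≤ ∫_E f
    have hdown : b * (ν E).toReal ≤ ∫ ω, f ω ∂(ν.restrict E) := by
      have hpos := aux_birkhoff_pos (ν.restrict E) hres
        (f := fun ω => f ω - b) (hf.sub measurable_const) (C := C + |b|)
        (fun ω => by
          have h1 := (hCf ω)
          beta_reduce
          rw [abs_le]
          exact ⟨by linarith [le_abs_self b], by linarith [neg_abs_le b]⟩) ?_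
      · have hint : Integrable f (ν.restrict E) := hfint.restrict
        rw [integral_sub hint (integrable_const b), integral_const, smul_eq_mul,
          measureReal_def, hrestuniv] at hpos
        linarith
      · apply Filter.Eventually.mono (ae_restrict_mem hEm)
        intro ω hω
        have hfreq : ∃ᶠ n in atTop, b < avg n ω :=
          frequently_lt_of_lt_limsup ((aux_bddge (fun n => havg0 n ω)).isCoboundedUnder_le) hω.2
        obtain ⟨n, hn1, hnb⟩ := (frequently_atTop.1 hfreq) 1
        refine ⟨n, ?_⟩
        have hsub : birkhoffSum S (fun ω => f ω - b) n ω = birkhoffSum S f n ω - n * b := by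
          simp [birkhoffSum, Finset.sum_sub_distrib, Finset.sum_const, nsmul_eq_mul]
        rw [hsub, hbSn n ω hn1]
        have hnR : (0:ℝ) < n := by exact_mod_cast hn1
        nlinarith
    -- upper estimate : ∫_E f ≤ a * (ν E).toReal
    have hup : ∫ ω, f ω ∂(ν.restrict E) ≤ a * (ν E).toReal := by
      have hpos := aux_birkhoff_pos (ν.restrict E) hres
        (f := fun ω => a - f ω) (measurable_const.sub hf) (C := C + |a|)
        (fun ω => by
          have h1 := (hCf ω)
          beta_reduce
          rw [abs_le]
          exact ⟨by linarith [neg_abs_le a], by linarith [le_abs_self a]⟩) ?_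
      · have hint : Integrable f (ν.restrict E) := hfint.restrict
        rw [integral_sub (integrable_const a) hint, integral_const, smul_eq_mul,
          measureReal_def, hrestuniv] at hpos
        linarith
      · apply Filter.Eventually.mono (ae_restrict_mem hEm)
        intro ω hω
        have hfreq : ∃ᶠ n in atTop, avg n ω < a :=
          frequently_lt_of_liminf_lt ((aux_bddle (fun n => havgC n ω)).isCoboundedUnder_ge) hω.1
        obtain ⟨n, hn1, hnb⟩ := (frequently_atTop.1 hfreq) 1
        refine ⟨n, ?_⟩
        have hsub : birkhoffSum S (fun ω => a - f ω) n ω = n * a - birkhoffSum S f n ω := by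
          simp [birkhoffSum, Finset.sum_sub_distrib, Finset.sum_const, nsmul_eq_mul]
        rw [hsub, hbSn n ω hn1]
        have hnR : (0:ℝ) < n := by exact_mod_cast hn1
        nlinarith
    have ht0 : (0:ℝ) ≤ (ν E).toReal := ENNReal.toReal_nonneg
    have ht : (ν E).toReal = 0 := by nlinarith
    have := ENNReal.toReal_eq_zero_iff (ν E) |>.1 ht
    rcases this with h | h
    · exact h
    · exact absurd h (measure_ne_top ν E)
  -- conclusion
  have hNull : ν {ω | inf ω < sig ω} = 0 := by
    have hsub : {ω | inf ω < sig ω} ⊆ ⋃ (q : ℚ × ℚ), ⋃ (_ : (q.1:ℝ) < (q.2:ℝ)),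
        {ω | inf ω < (q.1:ℝ) ∧ (q.2:ℝ) < sig ω} := by
      intro ω hω
      simp only [Set.mem_setOf_eq] at hω
      obtain ⟨q1, h1, h2⟩ := exists_rat_btwn hω
      obtain ⟨q2, h3, h4⟩ := exists_rat_btwn h2
      simp only [Set.mem_iUnion]
      exact ⟨(q1, q2), h3, h1, h4⟩
    apply measure_mono_null hsub
    apply measure_iUnion_null
    intro q
    apply measure_iUnion_null
    intro hq
    exact hkey q.1 q.2 hq
  rw [ae_iff]
  apply measure_mono_null ?_ hNull
  intro ω hω
  simp only [Set.mem_setOf_eq] at hω ⊢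
  by_contra hc
  push_neg at hc
  apply hω
  refine ⟨sig ω, tendsto_of_liminf_eq_limsup ?_ rfl
    (aux_bddle (fun n => havgC n ω)) (aux_bddge (fun n => havg0 n ω))⟩
  exact le_antisymm (hinf_le_sig ω) hc

end Birkhoff

lemma aux_transfer {X : Type*} [MeasurableSpace X] (ν : Measure X) [IsProbabilityMeasure ν]
    (ψ₁ ψ₂ : X → X → ℝ)
    (hsym : ∀ x y, ψ₂ x y = ψ₂ y x)
    (htri : ∀ x y z, ψ₂ x y ≤ ψ₂ x z + ψ₂ z y)
    (hae : ∀ᵐ x ∂ν, ∀ᵐ y ∂ν, ψ₂ x y ≤ ψ₁ x y)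
    (h : ∃ ε > (0:ℝ), ∀ B : Set X, MeasurableSet B → ν B ≠ 0 → ∃ x ∈ B, ∃ y ∈ B, ε ≤ ψ₂ x y) :
    ∃ ε > (0:ℝ), ∀ B : Set X, MeasurableSet B → ν B ≠ 0 → ∃ x ∈ B, ∃ y ∈ B, ε ≤ ψ₁ x y := by
  obtain ⟨ε, hε, hsen⟩ := h
  refine ⟨ε/3, by linarith, fun B hB hBpos => ?_⟩
  by_contra hcon
  push_neg at hcon
  have hz : ∃ z ∈ B, ∀ᵐ y ∂ν, ψ₂ z y ≤ ψ₁ z y := by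
    by_contra hno
    push_neg at hno
    have hsub : B ⊆ {x | ¬ ∀ᵐ y ∂ν, ψ₂ x y ≤ ψ₁ x y} := fun x hx h => (hno x hx) (h.mono fun y hy => not_lt.2 hy)
    exact hBpos (measure_mono_null hsub (ae_iff.1 hae))
  obtain ⟨z, hzB, hzae⟩ := hz
  obtain ⟨N, hNsub, hNm, hN0⟩ := exists_measurable_superset_of_null (ae_iff.1 hzae)
  set B' := B \ N with hB'
  have hB'm : MeasurableSet B' := hB.diff hNm
  have hB'pos : ν B' ≠ 0 := by
    rw [hB', measure_diff_null hN0]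
    exact hBpos
  obtain ⟨x, hx, y, hy, hxy⟩ := hsen B' hB'm hB'pos
  have hgood : ∀ w, w ∉ N → ψ₂ z w ≤ ψ₁ z w := by
    intro w hw
    by_contra hcontra
    exact hw (hNsub (by simpa using hcontra))
  have h1 : ψ₂ x y ≤ ψ₂ z x + ψ₂ z y := by
    have h0 := htri x y z
    rw [hsym x z] at h0
    exact h0
  have h2 : ψ₂ z x ≤ ψ₁ z x := hgood x hx.2
  have h3 : ψ₂ z y ≤ ψ₁ z y := hgood y hy.2
  have h4 : ψ₁ z x < ε/3 := hcon z hzB x hx.1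
  have h5 : ψ₁ z y < ε/3 := hcon z hzB y hy.1
  linarith

noncomputable def psiC {X : Type*} [MetricSpace X] (T : X → X) (x y : X) : ℝ :=
  limsup (fun n : ℕ =>
    (1 / (n : ℝ)) * ∑ k ∈ Finset.range n, dist (T^[k] x) (T^[k] y)) atTop

noncomputable def psiL {X : Type*} [MetricSpace X] (T : X → X) (x y : X) : ℝ :=
  limsup (fun n : ℕ =>
    (1 / H n) * ∑ k ∈ Finset.range n, (1 / (k + 1 : ℝ)) * dist (T^[k] x) (T^[k] y)) atTop

lemma aux_avg_bds {a : ℕ → ℝ} {C : ℝ} (hC0 : 0 ≤ C) (h : ∀ k, 0 ≤ a k ∧ a k ≤ C) (n : ℕ) :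
    0 ≤ (1/(n:ℝ)) * ∑ k ∈ range n, a k ∧ (1/(n:ℝ)) * ∑ k ∈ range n, a k ≤ C := by
  constructor
  · exact mul_nonneg (by positivity) (Finset.sum_nonneg fun k _ => (h k).1)
  · rcases Nat.eq_zero_or_pos n with rfl | hn
    · simpa using hC0
    · have hnR : (0:ℝ) < n := by exact_mod_cast hn
      have hs : ∑ k ∈ range n, a k ≤ n * C := by
        calc ∑ k ∈ range n, a k ≤ ∑ _k ∈ range n, C := Finset.sum_le_sum fun k _ => (h k).2
        _ = n * C := by simp [mul_comm]
      calc (1/(n:ℝ)) * ∑ k ∈ range n, a k ≤ (1/(n:ℝ)) * ((n:ℝ) * C) :=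
            mul_le_mul_of_nonneg_left hs (by positivity)
        _ = C := by field_simp

lemma aux_logavg_bds {a : ℕ → ℝ} {C : ℝ} (hC0 : 0 ≤ C) (h : ∀ k, 0 ≤ a k ∧ a k ≤ C) (n : ℕ) :
    0 ≤ (1/H n) * ∑ k ∈ range n, (1 / (k + 1 : ℝ)) * a k ∧
      (1/H n) * ∑ k ∈ range n, (1 / (k + 1 : ℝ)) * a k ≤ C := by
  have hH0 : 0 ≤ H n := Finset.sum_nonneg fun k _ => by positivity
  constructor
  · exact mul_nonneg (by positivity)
      (Finset.sum_nonneg fun k _ => mul_nonneg (by positivity) (h k).1)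
  · rcases Nat.eq_zero_or_pos n with rfl | hn
    · simpa [H] using hC0
    · have hH : 0 < H n := aux_H_pos hn
      have hs : ∑ k ∈ range n, (1 / (k + 1 : ℝ)) * a k ≤ C * H n := by
        rw [H, Finset.mul_sum]
        apply Finset.sum_le_sum
        intro k _
        calc (1 / (k + 1 : ℝ)) * a k ≤ (1 / (k + 1 : ℝ)) * C :=
              mul_le_mul_of_nonneg_left (h k).2 (by positivity)
          _ = C * (1 / (k + 1 : ℝ)) := mul_comm _ _
      calc (1/H n) * ∑ k ∈ range n, (1 / (k + 1 : ℝ)) * a k ≤ (1/H n) * (C * H n) :=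
            mul_le_mul_of_nonneg_left hs (by positivity)
        _ = C := by field_simp

lemma psiC_symm {X : Type*} [MetricSpace X] (T : X → X) (x y : X) :
    psiC T x y = psiC T y x := by
  unfold psiC
  congr 1
  funext n
  congr 1
  exact Finset.sum_congr rfl fun k _ => dist_comm _ _

lemma psiL_symm {X : Type*} [MetricSpace X] (T : X → X) (x y : X) :
    psiL T x y = psiL T y x := by
  unfold psiL
  congr 1
  funext n
  congr 1
  exact Finset.sum_congr rfl fun k _ => by rw [dist_comm]

lemma psiC_triangle {X : Type*} [MetricSpace X] {C : ℝ} (hC0 : 0 ≤ C)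
    (hC : ∀ x y : X, dist x y ≤ C) (T : X → X) (x y z : X) :
    psiC T x y ≤ psiC T x z + psiC T z y := by
  unfold psiC
  apply aux_limsup_triangle (C := C)
  · intro n
    have hsum : ∑ k ∈ range n, dist (T^[k] x) (T^[k] y)
        ≤ ∑ k ∈ range n, (dist (T^[k] x) (T^[k] z) + dist (T^[k] z) (T^[k] y)) :=
      Finset.sum_le_sum fun k _ => dist_triangle _ _ _
    calc (1/(n:ℝ)) * ∑ k ∈ range n, dist (T^[k] x) (T^[k] y)
        ≤ (1/(n:ℝ)) * ∑ k ∈ range n, (dist (T^[k] x) (T^[k] z) + dist (T^[k] z) (T^[k] y)) :=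
          mul_le_mul_of_nonneg_left hsum (by positivity)
      _ = (1/(n:ℝ)) * ∑ k ∈ range n, dist (T^[k] x) (T^[k] z)
          + (1/(n:ℝ)) * ∑ k ∈ range n, dist (T^[k] z) (T^[k] y) := by
          rw [Finset.sum_add_distrib]; ring
  · intro n; exact (aux_avg_bds hC0 (fun k => ⟨dist_nonneg, hC _ _⟩) n).1
  · intro n; exact (aux_avg_bds hC0 (fun k => ⟨dist_nonneg, hC _ _⟩) n).1
  · intro n; exact (aux_avg_bds hC0 (fun k => ⟨dist_nonneg, hC _ _⟩) n).2
  · intro n; exact (aux_avg_bds hC0 (fun k => ⟨dist_nonneg, hC _ _⟩) n).1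
  · intro n; exact (aux_avg_bds hC0 (fun k => ⟨dist_nonneg, hC _ _⟩) n).2

lemma psiL_triangle {X : Type*} [MetricSpace X] {C : ℝ} (hC0 : 0 ≤ C)
    (hC : ∀ x y : X, dist x y ≤ C) (T : X → X) (x y z : X) :
    psiL T x y ≤ psiL T x z + psiL T z y := by
  unfold psiL
  apply aux_limsup_triangle (C := C)
  · intro n
    have hsum : ∑ k ∈ range n, (1 / (k + 1 : ℝ)) * dist (T^[k] x) (T^[k] y)
        ≤ ∑ k ∈ range n, ((1 / (k + 1 : ℝ)) * dist (T^[k] x) (T^[k] z)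
            + (1 / (k + 1 : ℝ)) * dist (T^[k] z) (T^[k] y)) := by
      apply Finset.sum_le_sum
      intro k _
      rw [← mul_add]
      exact mul_le_mul_of_nonneg_left (dist_triangle _ _ _) (by positivity)
    have hH0 : 0 ≤ H n := Finset.sum_nonneg fun k _ => by positivity
    calc (1/H n) * ∑ k ∈ range n, (1 / (k + 1 : ℝ)) * dist (T^[k] x) (T^[k] y)
        ≤ (1/H n) * ∑ k ∈ range n, ((1 / (k + 1 : ℝ)) * dist (T^[k] x) (T^[k] z)
            + (1 / (k + 1 : ℝ)) * dist (T^[k] z) (T^[k] y)) :=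
          mul_le_mul_of_nonneg_left hsum (by positivity)
      _ = (1/H n) * ∑ k ∈ range n, (1 / (k + 1 : ℝ)) * dist (T^[k] x) (T^[k] z)
          + (1/H n) * ∑ k ∈ range n, (1 / (k + 1 : ℝ)) * dist (T^[k] z) (T^[k] y) := by
          rw [Finset.sum_add_distrib]; ring
  · intro n; exact (aux_logavg_bds hC0 (fun k => ⟨dist_nonneg, hC _ _⟩) n).1
  · intro n; exact (aux_logavg_bds hC0 (fun k => ⟨dist_nonneg, hC _ _⟩) n).1
  · intro n; exact (aux_logavg_bds hC0 (fun k => ⟨dist_nonneg, hC _ _⟩) n).2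
  · intro n; exact (aux_logavg_bds hC0 (fun k => ⟨dist_nonneg, hC _ _⟩) n).1
  · intro n; exact (aux_logavg_bds hC0 (fun k => ⟨dist_nonneg, hC _ _⟩) n).2


/-- For an ergodic `T`-invariant Borel probability measure `μ`, the system `(X,T)` is
`μ`-mean sensitive if and only if it is `μ`-logarithmically mean sensitive. -/
theorem muMeanSensitive_iff_muLogMeanSensitive
    {X : Type*} [MetricSpace X] [CompactSpace X] [Nonempty X]
    [MeasurableSpace X] [BorelSpace X]
    (T : X → X) (hT : Continuous T)
    (μ : ProbabilityMeasure X) (hμ : IsErgodicMeasure T μ) :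
    MuMeanSensitive T μ ↔ MuLogMeanSensitive T μ := by
  obtain ⟨Cb, hCb⟩ : ∃ C : ℝ, ∀ x y : X, dist x y ≤ C := by
    obtain ⟨C, hC⟩ := Metric.isBounded_iff.1 (isCompact_univ (X := X)).isBounded
    exact ⟨C, fun x y => hC (Set.mem_univ x) (Set.mem_univ y)⟩
  have hCb0 : 0 ≤ Cb :=
    le_trans dist_nonneg (hCb (Classical.arbitrary X) (Classical.arbitrary X))
  have hTpres : MeasurePreserving T (μ : Measure X) (μ : Measure X) := by
    refine ⟨hT.measurable, Measure.ext fun s hs => ?_⟩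
    rw [Measure.map_apply hT.measurable hs]
    have h3 := congrArg (fun r : NNReal => (r : ENNReal)) (hμ.1 s hs)
    simpa [ProbabilityMeasure.ennreal_coeFn_eq_coeFn_toMeasure] using h3
  set ν : Measure (X × X) := (μ : Measure X).prod (μ : Measure X) with hν
  have hSpres : MeasurePreserving (Prod.map T T) ν ν := hTpres.prod hTpres
  have hfm : Measurable (fun p : X × X => dist p.1 p.2) := measurable_dist
  have hkey := aux_birkhoff ν hSpres hfm hCb0 (fun p => ⟨dist_nonneg, hCb _ _⟩)
  have haeEq : ∀ᵐ p ∂ν, psiC T p.1 p.2 = psiL T p.1 p.2 := by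
    filter_upwards [hkey] with p hp
    obtain ⟨L, hL⟩ := hp
    have hbs : ∀ n : ℕ, birkhoffSum (Prod.map T T) (fun p : X × X => dist p.1 p.2) n p
        = ∑ k ∈ Finset.range n, dist (T^[k] p.1) (T^[k] p.2) := by
      intro n
      unfold birkhoffSum
      apply Finset.sum_congr rfl
      intro k _
      rw [Prod.map_iterate]
      rfl
    have hCc : Tendsto (fun n : ℕ =>
        (n:ℝ)⁻¹ * ∑ k ∈ Finset.range n, dist (T^[k] p.1) (T^[k] p.2)) atTop (𝓝 L) := by
      apply hL.congr; intro n; rw [hbs n]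
    have hCc' : Tendsto (fun n : ℕ =>
        (1/(n:ℝ)) * ∑ k ∈ Finset.range n, dist (T^[k] p.1) (T^[k] p.2)) atTop (𝓝 L) := by
      simpa [one_div] using hCc
    have hLg := aux_log_of_cesaro (fun k => dist (T^[k] p.1) (T^[k] p.2)) L hCc
    unfold psiC psiL
    rw [hCc'.limsup_eq, hLg.limsup_eq]
  have haeae := Measure.ae_ae_of_ae_prod haeEq
  have hposiff : ∀ B : Set X, (0 < μ B) ↔ ((μ : Measure X) B ≠ 0) := by
    intro B
    rw [pos_iff_ne_zero, Ne, Ne, ProbabilityMeasure.null_iff_toMeasure_null]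
  have hM : MuMeanSensitive T μ ↔ (∃ ε > (0:ℝ), ∀ B : Set X, MeasurableSet B →
      (μ : Measure X) B ≠ 0 → ∃ x ∈ B, ∃ y ∈ B, ε ≤ psiC T x y) := by
    constructor
    · rintro ⟨ε, hε, hh⟩
      exact ⟨ε, hε, fun B hB h0 => hh B hB ((hposiff B).2 h0)⟩
    · rintro ⟨ε, hε, hh⟩
      exact ⟨ε, hε, fun B hB h0 => hh B hB ((hposiff B).1 h0)⟩
  have hL : MuLogMeanSensitive T μ ↔ (∃ ε > (0:ℝ), ∀ B : Set X, MeasurableSet B →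
      (μ : Measure X) B ≠ 0 → ∃ x ∈ B, ∃ y ∈ B, ε ≤ psiL T x y) := by
    constructor
    · rintro ⟨ε, hε, hh⟩
      exact ⟨ε, hε, fun B hB h0 => hh B hB ((hposiff B).2 h0)⟩
    · rintro ⟨ε, hε, hh⟩
      exact ⟨ε, hε, fun B hB h0 => hh B hB ((hposiff B).1 h0)⟩
  constructor
  · intro h
    rw [hL]
    apply aux_transfer (μ : Measure X) (psiL T) (psiC T) (psiC_symm T)
      (psiC_triangle hCb0 hCb T) ?_ (hM.1 h)
    filter_upwards [haeae] with x hx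
    filter_upwards [hx] with y hy
    exact le_of_eq hy
  · intro h
    rw [hM]
    apply aux_transfer (μ : Measure X) (psiC T) (psiL T) (psiL_symm T)
      (psiL_triangle hCb0 hCb T) ?_ (hL.1 h)
    filter_upwards [haeae] with x hx
    filter_upwards [hx] with y hy
    exact le_of_eq hy.symm
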